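/- The decorated rooted tree T(n_1,...,n_k), defined recursively by: the root has k children, the i-th child being the root of T(n_{i+1},...,n_k, n_i − 1) with the last entry n_i − 1 omitted when n_i = 1 (and T() being a single leaf), has exactly ∏_{i=1}^k (n_i + 1) vertices when all n_i are finite positive integers. -/

import Mathlib

lemma prodA (l : List ℕ) (hpos : ∀ x ∈ l, 1 ≤ x) :
    (l.map (· + 1)).prod = 1 + ∑ i : Fin l.length,
      ((l.drop (i.1 + 1) ++ (if l.get i = 1 then [] else [l.get i - 1])).map (· + 1)).prod := by
  induction l with
  | nil => simp
  | cons a t ih =>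
    have ha : 1 ≤ a := hpos a (by simp)
    have iht := ih (fun x hx => hpos x (by simp [hx]))
    have hsucc : ∀ x : Fin t.length,
        ((List.drop (x.succ.1 + 1) (a :: t) ++
          (if (a :: t).get x.succ = 1 then [] else [(a :: t).get x.succ - 1])).map (· + 1)).prod
        = ((t.drop (x.1 + 1) ++ (if t.get x = 1 then [] else [t.get x - 1])).map (· + 1)).prod := by
      intro x
      simp
    simp only [List.length_cons]
    rw [Fin.sum_univ_succ]
    simp only [hsucc]
    simp only [Fin.val_zero, zero_add, List.drop_succ_cons, List.drop_zero,
      List.get_cons_zero, List.map_append, List.prod_append, List.map_cons, List.prod_cons]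
    simp only [List.map_append, List.prod_append] at iht
    by_cases h : a = 1
    · simp only [h, eq_self_iff_true, if_true, List.map_nil, List.prod_nil, mul_one, one_mul]
      rw [iht]; ring
    · simp only [h, ↓reduceIte, List.map_cons, List.map_nil, List.prod_cons, List.prod_nil]
      have hh : a - 1 + 1 = a := by omega
      rw [hh, iht]
      ring

lemma sumDec : ∀ (l : List ℕ) (i : Fin l.length), (∀ x ∈ l, 1 ≤ x) →
    (l.drop (i.1 + 1) ++ (if l.get i = 1 then [] else [l.get i - 1])).sum < l.sum := by
  intro l
  induction l with
  | nil => exact fun i => i.elim0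
  | cons a t ih =>
    intro i hl
    refine Fin.cases ?_ ?_ i
    · have ha : 1 ≤ a := hl a (by simp)
      simp only [List.get_cons_zero, List.drop_succ_cons, List.drop_zero, List.sum_append,
        List.sum_cons, Fin.val_zero, zero_add]
      by_cases hs : a = 1 <;> simp [hs] <;> omega
    · intro j
      have h1 := ih j (fun x hx => hl x (by simp [hx]))
      have ha : 1 ≤ a := hl a (by simp)
      have h2 : ((a :: t).drop (j.succ.1 + 1) ++
          (if (a :: t).get j.succ = 1 then [] else [(a :: t).get j.succ - 1])).sum
          = (t.drop (j.1 + 1) ++ (if t.get j = 1 then [] else [t.get j - 1])).sum := by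
        simp
      rw [h2, List.sum_cons]
      omega

theorem stmt_13 (V : List ℕ → ℕ)
    (hrec : ∀ l : List ℕ, (∀ i ∈ l, 1 ≤ i) →
      V l = 1 + ∑ i : Fin l.length,
        V (l.drop (i.1 + 1) ++ (if l.get i = 1 then [] else [l.get i - 1])))
    (l : List ℕ) (hl : ∀ i ∈ l, 1 ≤ i) :
    V l = (l.map (· + 1)).prod := by
  suffices H : ∀ n (l : List ℕ), (∀ i ∈ l, 1 ≤ i) → l.sum = n →
      V l = (l.map (· + 1)).prod from H l.sum l hl rfl
  intro n
  induction n using Nat.strong_induction_on with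
  | _ n ih =>
  intro l hl hn
  rw [hrec l hl, prodA l hl]
  congr 1
  refine Finset.sum_congr rfl fun i _ => ?_
  refine ih _ (hn ▸ sumDec l i hl) _ ?_ rfl
  intro x hx
  rcases List.mem_append.1 hx with h | h
  · exact hl x (List.mem_of_mem_drop h)
  · have hg : 1 ≤ l.get i := hl _ (List.get_mem l i)
    split at h
    · simp at h
    · rw [List.mem_singleton] at h
      omega
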